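/- Let X be the Jacobi matrix of the Jacobi sequence ω n = (n+1)²/((2n+1)(2n+3)) and α n = 0 (the quantum decomposition of the uniform distribution on [−1,1]). Then for every natural number m, lim_{k→∞} ⟨(X/√(ω k + ω(k−1)))^m e_k, e_k⟩ = ∫_{−√2}^{√2} x^m/(π√(2−x²)) dx. -/

import Mathlib

open Filter intervalIntegral MeasureTheory

set_option maxHeartbeats 1000000

/-- The Jacobi matrix of a Jacobi sequence `(ω, α)`, acting on finitely supported
real sequences indexed by `ℕ`:
`X e_n = √(ω n)·e_{n+1} + α n·e_n + √(ω (n-1))·e_{n-1}`, last term omitted for `n = 0`. -/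
noncomputable def jacobiOp (ω α : ℕ → ℝ) : (ℕ →₀ ℝ) →ₗ[ℝ] (ℕ →₀ ℝ) :=
  Finsupp.lsum ℝ fun n => LinearMap.toSpanSingleton ℝ (ℕ →₀ ℝ)
    (Real.sqrt (ω n) • Finsupp.single (n + 1) 1 + α n • Finsupp.single n 1 +
      if n = 0 then 0 else Real.sqrt (ω (n - 1)) • Finsupp.single (n - 1) 1)

/-- The Jacobi sequence of the uniform distribution on `[-1, 1]`. -/
noncomputable def uniformOmega (n : ℕ) : ℝ :=
  ((n : ℝ) + 1) ^ 2 / ((2 * (n : ℝ) + 1) * (2 * (n : ℝ) + 3))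


theorem jacobiOp_apply (ω : ℕ → ℝ) (f : ℕ →₀ ℝ) (j : ℕ) :
    (jacobiOp ω (fun _ => 0) f) j =
      (if j = 0 then 0 else Real.sqrt (ω (j - 1)) * f (j - 1)) +
        Real.sqrt (ω j) * f (j + 1) := by
  induction f using Finsupp.induction_linear with
  | zero => simp
  | add f g hf hg =>
      rw [map_add, Finsupp.add_apply, hf, hg]
      simp only [Finsupp.add_apply]
      split <;> ring
  | single n v =>
      rw [jacobiOp, Finsupp.lsum_single, LinearMap.toSpanSingleton_apply]
      rcases n with _ | p <;> rcases j with _ | q <;>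
        simp [Finsupp.single_apply, Finsupp.add_apply, mul_comm] <;>
        split_ifs <;> (try subst_vars) <;> first | ring1 | omega | (exfalso; omega) | (simp [add_comm] ; try ring)

lemma tendsto_uniformOmega : Tendsto uniformOmega atTop (nhds (1/4)) := by
  have h0 : Tendsto (fun n : ℕ => (n : ℝ)⁻¹) atTop (nhds 0) :=
    tendsto_inv_atTop_nhds_zero_nat
  have h : Tendsto (fun n : ℕ => (1 + (n:ℝ)⁻¹)^2 / ((2 + (n:ℝ)⁻¹) * (2 + 3*(n:ℝ)⁻¹)))
      atTop (nhds (1/4)) := by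
    have : (1/4 : ℝ) = (1 + 0)^2 / ((2 + 0) * (2 + 3*0)) := by norm_num
    rw [this]
    exact (((tendsto_const_nhds.add h0).pow 2).div
      (((tendsto_const_nhds.add h0).mul (tendsto_const_nhds.add (h0.const_mul 3))))
      (by norm_num))
  refine h.congr' ?_
  filter_upwards [eventually_ge_atTop 1] with n hn
  have hn' : (n:ℝ) ≠ 0 := Nat.cast_ne_zero.2 (by omega)
  unfold uniformOmega
  field_simp

lemma tendsto_sqrt_uniformOmega : Tendsto (fun n => Real.sqrt (uniformOmega n)) atTop (nhds (1/2)) := by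
  have : (1/2 : ℝ) = Real.sqrt (1/4) := by
    rw [show (1/4 : ℝ) = (1/2)^2 by norm_num, Real.sqrt_sq (by norm_num)]
  rw [this]
  exact (Real.continuous_sqrt.continuousAt.tendsto).comp tendsto_uniformOmega

lemma tendsto_toNat (c : ℤ) : Tendsto (fun k : ℕ => ((k : ℤ) + c).toNat) atTop atTop := by
  refine tendsto_atTop_atTop.2 fun N => ⟨N + c.natAbs, fun k hk => ?_⟩
  omega

lemma tendsto_sqrt_uniformOmega_shift (c : ℤ) :
    Tendsto (fun k : ℕ => Real.sqrt (uniformOmega (((k:ℤ) + c).toNat))) atTop (nhds (1/2)) :=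
  tendsto_sqrt_uniformOmega.comp (tendsto_toNat c)

def pathB : ℕ → ℤ → ℕ
  | 0, d => if d = 0 then 1 else 0
  | (m+1), d => pathB m (d-1) + pathB m (d+1)

lemma pathB_eq (m : ℕ) : ∀ d : ℤ,
    pathB m d = if -(m:ℤ) ≤ d ∧ ((m:ℤ) + d) % 2 = 0
      then Nat.choose m (((m:ℤ) + d)/2).toNat else 0 := by
  induction m with
  | zero =>
      intro d
      rcases eq_or_ne d 0 with rfl | hd
      · simp [pathB]
      · rw [pathB, if_neg hd]
        split_ifs with h
        · exact (Nat.choose_eq_zero_of_lt (by omega)).symm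
        · rfl
  | succ m ih =>
      intro d
      rw [pathB, ih (d-1), ih (d+1)]
      by_cases hb : d = -((m:ℤ)+1)
      · subst hb
        rw [if_neg (by omega), if_pos (by constructor <;> omega), if_pos (by push_cast; constructor <;> omega)]
        have e0 : ((((m:ℕ):ℤ)+1) + -(((m:ℕ):ℤ)+1))/2 = 0 := by omega
        have e1 : ((((m:ℕ):ℤ)) + (-(((m:ℕ):ℤ)+1)+1))/2 = 0 := by omega
        push_cast
        rw [e0, e1]
        simp
      · by_cases hc : -((m:ℤ)+1) ≤ d ∧ ((m:ℤ)+1+d) % 2 = 0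
        · -- main case : d ≥ -m+1, parity even
          have hd1 : -(m:ℤ) + 1 ≤ d := by omega
          obtain ⟨u, hu⟩ : ∃ u : ℕ, ((((m:ℕ):ℤ)+1+d)/2).toNat = u + 1 := ⟨((((m:ℕ):ℤ)+1+d)/2).toNat - 1, by omega⟩
          rw [if_pos (by push_cast; constructor <;> omega)]
          rw [if_pos (by constructor <;> omega), if_pos (by constructor <;> omega)]
          have e1 : (((m:ℕ):ℤ) + (d-1))/2 = u := by omega
          have e2 : (((m:ℕ):ℤ) + (d+1))/2 = u + 1 := by omega
          push_cast
          rw [e1, e2]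
          have e3 : ((((m:ℕ):ℤ)+1+d)/2).toNat = u + 1 := hu
          push_cast at e3 ⊢
          rw [e3]
          simp [Nat.choose_succ_succ]
        · -- condition fails for m+1
          rw [if_neg (by push_cast; push_cast at hc; omega)]
          rw [if_neg (by omega), if_neg (by omega)]

lemma pathB_zero (m : ℕ) :
    pathB m 0 = if m % 2 = 0 then Nat.centralBinom (m/2) else 0 := by
  rw [pathB_eq m 0]
  rcases Nat.even_or_odd m with ⟨j, rfl⟩ | ⟨j, rfl⟩
  · rw [if_pos (by constructor <;> omega), if_pos (by omega)]
    have e1 : (((j+j : ℕ):ℤ) + 0)/2 = (j:ℤ) := by push_cast; omega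
    rw [e1]
    have e2 : (j+j)/2 = j := by omega
    rw [e2, Int.toNat_natCast, Nat.centralBinom]
    congr 1
    omega
  · rw [if_neg (by push_cast; omega), if_neg (by omega)]

lemma pathB_rec (m : ℕ) : (m+2) * pathB (m+2) 0 = 4*(m+1) * pathB m 0 := by
  rcases Nat.even_or_odd m with ⟨j, rfl⟩ | ⟨j, rfl⟩
  · have h2 : (j + j + 2) % 2 = 0 := by omega
    have h3 : (j + j) % 2 = 0 := by omega
    rw [pathB_zero, pathB_zero, if_pos h2, if_pos h3]
    have e1 : (j + j + 2)/2 = j + 1 := by omega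
    have e2 : (j + j)/2 = j := by omega
    rw [e1, e2]
    have h := Nat.succ_mul_centralBinom_succ j
    calc (j+j+2) * Nat.centralBinom (j+1) = 2*((j+1)*Nat.centralBinom (j+1)) := by ring
      _ = 2*(2*(2*j+1)*Nat.centralBinom j) := by rw [h]
      _ = 4*(j+j+1)*Nat.centralBinom j := by ring
  · rw [pathB_zero, pathB_zero, if_neg (by omega), if_neg (by omega)]
    simp

noncomputable abbrev jacX:= jacobiOp uniformOmega (fun _ => 0)

lemma tendsto_coeff (m : ℕ) (d : ℤ) :
    Tendsto (fun k : ℕ => ((jacX ^ m) (Finsupp.single k 1)) (((k:ℤ) + d).toNat))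
      atTop (nhds ((pathB m d : ℝ) / 2 ^ m)) := by
  induction m generalizing d with
  | zero =>
      refine tendsto_const_nhds.congr' ?_
      filter_upwards [eventually_ge_atTop (d.natAbs + 1)] with k hk
      rcases eq_or_ne d 0 with rfl | hd
      · have : (((k:ℤ) + 0)).toNat = k := by omega
        simp [pathB, this]
      · have : (((k:ℤ) + d)).toNat ≠ k := by omega
        simp [pathB, hd, pow_succ, Finsupp.single_apply, this, Ne.symm this]
  | succ m ih =>
      have hlim : Tendsto (fun k : ℕ =>
          Real.sqrt (uniformOmega (((k:ℤ) + (d-1)).toNat)) *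
            ((jacX ^ m) (Finsupp.single k 1)) (((k:ℤ) + (d-1)).toNat) +
          Real.sqrt (uniformOmega (((k:ℤ) + d).toNat)) *
            ((jacX ^ m) (Finsupp.single k 1)) (((k:ℤ) + (d+1)).toNat))
          atTop (nhds ((pathB (m+1) d : ℝ) / 2 ^ (m+1))) := by
        have h1 := (tendsto_sqrt_uniformOmega_shift (d-1)).mul (ih (d-1))
        have h2 := (tendsto_sqrt_uniformOmega_shift d).mul (ih (d+1))
        have := h1.add h2
        convert this using 2
        rw [pathB]
        push_cast
        ring
      refine hlim.congr' ?_
      filter_upwards [eventually_ge_atTop (d.natAbs + m + 2)] with k hk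
      have hj : (((k:ℤ) + d)).toNat ≠ 0 := by omega
      rw [pow_succ', Module.End.mul_apply, jacobiOp_apply, if_neg hj]
      have e1 : (((k:ℤ) + d)).toNat - 1 = (((k:ℤ) + (d-1))).toNat := by omega
      have e2 : (((k:ℤ) + d)).toNat + 1 = (((k:ℤ) + (d+1))).toNat := by omega
      rw [e1, e2]

lemma sq_lt_two {x : ℝ} (hx : x ∈ Set.Ioo (-Real.sqrt 2) (Real.sqrt 2)) : x^2 < 2 := by
  have h2 : Real.sqrt 2 ^ 2 = 2 := Real.sq_sqrt (by norm_num)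
  nlinarith [hx.1, hx.2]

lemma hasDerivAt_asin2 {x : ℝ} (hx : x ∈ Set.Ioo (-Real.sqrt 2) (Real.sqrt 2)) :
    HasDerivAt (fun y => Real.arcsin (y / Real.sqrt 2)) (1 / Real.sqrt (2 - x^2)) x := by
  have h2 : (0:ℝ) < Real.sqrt 2 := Real.sqrt_pos.2 (by norm_num)
  have hq : x^2 < 2 := sq_lt_two hx
  have hne1 : x / Real.sqrt 2 ≠ -1 := by
    intro h
    have : x = -Real.sqrt 2 := by field_simp at h; linarith
    simp [this] at hx
  have hne2 : x / Real.sqrt 2 ≠ 1 := by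
    intro h
    have hx2 : x = Real.sqrt 2 := by field_simp at h; exact h
    rw [hx2] at hx
    exact absurd hx.2 (lt_irrefl _)
  have h := (Real.hasDerivAt_arcsin hne1 hne2).comp x ((hasDerivAt_id x).div_const (Real.sqrt 2))
  refine h.congr_deriv ?_
  have e1 : 1 - (x / Real.sqrt 2)^2 = (2 - x^2)/2 := by
    rw [div_pow, Real.sq_sqrt (by norm_num : (2:ℝ) ≥ 0).le]
    ring
  rw [e1]
  have hpos : 0 < Real.sqrt (2 - x^2) := Real.sqrt_pos.2 (by linarith)
  have h2' : (0:ℝ) < Real.sqrt 2 := Real.sqrt_pos.2 (by norm_num)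
  rw [Real.sqrt_div (by linarith : (0:ℝ) ≤ 2 - x^2) 2]
  field_simp

lemma neg_sqrt_le : -Real.sqrt 2 ≤ Real.sqrt 2 :=
  (neg_nonpos.2 (Real.sqrt_nonneg 2)).trans (Real.sqrt_nonneg 2)

lemma intInt_one_div : IntervalIntegrable (fun x : ℝ => 1 / Real.sqrt (2 - x^2))
    MeasureTheory.volume (-Real.sqrt 2) (Real.sqrt 2) := by
  apply intervalIntegrable_deriv_of_nonneg
    (g := fun y => Real.arcsin (y / Real.sqrt 2))
  · exact (Real.continuous_arcsin.comp (continuous_id.div_const _)).continuousOn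
  · intro x hx
    rw [inf_eq_left.2 (neg_sqrt_le),
      sup_eq_right.2 (neg_sqrt_le)] at hx
    exact hasDerivAt_asin2 hx
  · intro x _
    positivity

lemma intInt_pow_div (n : ℕ) : IntervalIntegrable (fun x : ℝ => x ^ n / Real.sqrt (2 - x^2))
    MeasureTheory.volume (-Real.sqrt 2) (Real.sqrt 2) := by
  apply (intInt_one_div.const_mul ((Real.sqrt 2)^n)).mono_fun
  · apply Measurable.aestronglyMeasurable
    exact (measurable_id.pow_const n).div
      ((measurable_const.sub (measurable_id.pow_const 2)).sqrt)
  · rw [Filter.EventuallyLE, ae_restrict_iff' measurableSet_uIoc]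
    refine Filter.Eventually.of_forall fun x hx => ?_
    have hxb : |x| ≤ Real.sqrt 2 := by
      rw [Set.uIoc_of_le neg_sqrt_le] at hx
      rw [abs_le]
      exact ⟨le_of_lt hx.1, hx.2⟩
    have hs : 0 ≤ Real.sqrt (2 - x^2) := Real.sqrt_nonneg _
    simp only [Real.norm_eq_abs, abs_div, abs_pow, abs_mul, abs_of_nonneg hs]
    rw [abs_of_nonneg (Real.sqrt_nonneg 2), abs_one]
    rcases eq_or_lt_of_le hs with h0 | h0
    · rw [← h0]
      simp
    · rw [div_le_iff₀ h0, mul_assoc, one_div, inv_mul_cancel₀ (ne_of_gt h0), mul_one]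
      exact pow_le_pow_left₀ (abs_nonneg x) hxb n

noncomputable def Jm (n : ℕ) : ℝ :=
  ∫ x in (-Real.sqrt 2)..(Real.sqrt 2), x ^ n / Real.sqrt (2 - x^2)

lemma Jm_zero : Jm 0 = Real.pi := by
  have h := integral_eq_sub_of_hasDeriv_right_of_le neg_sqrt_le
    (f := fun y => Real.arcsin (y / Real.sqrt 2))
    (f' := fun x => 1 / Real.sqrt (2 - x^2))
    ((Real.continuous_arcsin.comp (continuous_id.div_const _)).continuousOn)
    (fun x hx => (hasDerivAt_asin2 hx).hasDerivWithinAt)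
    intInt_one_div
  have h2 : Real.sqrt 2 ≠ 0 := by positivity
  have h : (∫ x in (-Real.sqrt 2)..(Real.sqrt 2), 1 / Real.sqrt (2 - x^2))
      = Real.arcsin (Real.sqrt 2 / Real.sqrt 2) - Real.arcsin (-Real.sqrt 2 / Real.sqrt 2) := h
  rw [div_self h2] at h
  rw [show -Real.sqrt 2 / Real.sqrt 2 = -1 by rw [neg_div, div_self h2]] at h
  rw [Real.arcsin_one, Real.arcsin_neg_one] at h
  unfold Jm
  rw [intervalIntegral.integral_congr (g := fun x : ℝ => 1 / Real.sqrt (2 - x^2))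
    (fun x _ => by simp), h]
  ring

lemma Jm_one : Jm 1 = 0 := by
  have hodd : ∀ x : ℝ, (-x)^1 / Real.sqrt (2 - (-x)^2) = -(x^1 / Real.sqrt (2 - x^2)) := by
    intro x; rw [neg_sq]; ring
  have h1 : (∫ x in (-Real.sqrt 2)..(Real.sqrt 2), (-x)^1 / Real.sqrt (2 - (-x)^2))
      = Jm 1 := by
    rw [intervalIntegral.integral_comp_neg (fun x => x^1 / Real.sqrt (2 - x^2))]
    unfold Jm
    rw [neg_neg]
  rw [intervalIntegral.integral_congr (g := fun x : ℝ => -(x^1 / Real.sqrt (2 - x^2)))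
    (fun x _ => hodd x), intervalIntegral.integral_neg] at h1
  unfold Jm at h1 ⊢
  linarith

lemma Jm_rec (n : ℕ) : ((n:ℝ)+2) * Jm (n+2) = 2*((n:ℝ)+1) * Jm n := by
  have hder : ∀ x ∈ Set.Ioo (-Real.sqrt 2) (Real.sqrt 2),
      HasDerivAt (fun y : ℝ => y^(n+1) * Real.sqrt (2 - y^2))
        (2*((n:ℝ)+1) * (x^n / Real.sqrt (2 - x^2))
          - ((n:ℝ)+2) * (x^(n+2) / Real.sqrt (2 - x^2))) x := by
    intro x hx
    have hq : x^2 < 2 := sq_lt_two hx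
    have hpos : 0 < Real.sqrt (2 - x^2) := Real.sqrt_pos.2 (by linarith)
    have hinner : HasDerivAt (fun y : ℝ => 2 - y^2) (-(2*x)) x := by
      simpa using ((hasDerivAt_pow 2 x).const_sub 2)
    have hsq : HasDerivAt (fun y : ℝ => Real.sqrt (2 - y^2))
        (1 / (2 * Real.sqrt (2 - x^2)) * (-(2*x))) x :=
      (Real.hasDerivAt_sqrt (by linarith : 2 - x^2 ≠ 0)).comp x hinner
    have hmul := (hasDerivAt_pow (n+1) x).mul hsq
    refine hmul.congr_deriv ?_
    have hs2 : Real.sqrt (2 - x^2) * Real.sqrt (2 - x^2) = 2 - x^2 :=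
      Real.mul_self_sqrt (by linarith)
    rw [Nat.add_sub_cancel] at hmul
    push_cast
    field_simp
    linear_combination ((n:ℝ)+1) * x^n * hs2
  have hint : IntervalIntegrable (fun x : ℝ =>
      2*((n:ℝ)+1) * (x^n / Real.sqrt (2 - x^2)) - ((n:ℝ)+2) * (x^(n+2) / Real.sqrt (2 - x^2)))
      MeasureTheory.volume (-Real.sqrt 2) (Real.sqrt 2) :=
    ((intInt_pow_div n).const_mul _).sub ((intInt_pow_div (n+2)).const_mul _)
  have h := integral_eq_sub_of_hasDeriv_right_of_le neg_sqrt_le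
    (f := fun y : ℝ => y^(n+1) * Real.sqrt (2 - y^2))
    (by fun_prop)
    (fun x hx => (hder x hx).hasDerivWithinAt)
    hint
  have hzero : Real.sqrt (2 - (Real.sqrt 2)^2) = 0 := by
    rw [Real.sq_sqrt (by norm_num : (0:ℝ) ≤ 2)]
    simp
  have h : (∫ x in (-Real.sqrt 2)..(Real.sqrt 2),
      (2*((n:ℝ)+1) * (x^n / Real.sqrt (2 - x^2)) - ((n:ℝ)+2) * (x^(n+2) / Real.sqrt (2 - x^2))))
      = (Real.sqrt 2)^(n+1) * Real.sqrt (2 - (Real.sqrt 2)^2)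
        - (-Real.sqrt 2)^(n+1) * Real.sqrt (2 - (-Real.sqrt 2)^2) := h
  rw [intervalIntegral.integral_sub ((intInt_pow_div n).const_mul _)
    ((intInt_pow_div (n+2)).const_mul _),
    intervalIntegral.integral_const_mul, intervalIntegral.integral_const_mul] at h
  have hz2 : Real.sqrt (2 - (-Real.sqrt 2)^2) = 0 := by rw [neg_sq]; exact hzero
  rw [hzero, hz2] at h
  simp only [mul_zero, sub_zero] at h
  unfold Jm
  linarith [h]

lemma sqrt2_sq : Real.sqrt 2 * Real.sqrt 2 = 2 := Real.mul_self_sqrt (by norm_num)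

lemma Jm_closed (m : ℕ) :
    Jm m = Real.pi * (Real.sqrt 2)^m * (pathB m 0 : ℝ) / 2^m := by
  induction m using Nat.strong_induction_on with
  | _ m ih =>
    match m with
    | 0 => simp [Jm_zero, pathB]
    | 1 =>
        rw [Jm_one]
        have : pathB 1 0 = 0 := by simp [pathB]
        rw [this]
        simp
    | (n+2) =>
        have h := Jm_rec n
        have hb' : ((n:ℝ)+2) * (pathB (n+2) 0 : ℝ) = 4*((n:ℝ)+1) * (pathB n 0 : ℝ) := by
          exact_mod_cast pathB_rec n
        have hn2 : ((n:ℝ)+2) ≠ 0 := by positivity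
        have hJn := ih n (by omega)
        have hs : (Real.sqrt 2)^(n+2) = 2 * (Real.sqrt 2)^n := by
          rw [pow_succ, pow_succ, mul_assoc, sqrt2_sq]
          ring
        have hJ2 : Jm (n+2) = 2*((n:ℝ)+1) * Jm n / ((n:ℝ)+2) := by
          rw [eq_div_iff hn2]
          linarith [h]
        rw [hJ2, hJn, hs]
        have h2n : (2:ℝ)^(n+2) = 2^n * 4 := by rw [pow_succ, pow_succ]; ring
        rw [h2n]
        have h2pos : (0:ℝ) < 2^n := by positivity
        field_simp
        linear_combination (-1 : ℝ) * hb'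

/-- Classical limit of the quantum decomposition of the uniform distribution on `[-1,1]`
(`ω n = (n+1)²/((2n+1)(2n+3))`, `α n = 0`): the normalized moments converge to those of
the arcsine law. -/
theorem uniform_classical_limit_arcsine (m : ℕ) :
    Tendsto
      (fun k : ℕ =>
        ((((1 / Real.sqrt (uniformOmega k + uniformOmega (k - 1))) •
            jacobiOp uniformOmega (fun _ => 0)) ^ m)
          (Finsupp.single k 1)) k)
      atTop
      (nhds (∫ x in (-Real.sqrt 2)..(Real.sqrt 2), x ^ m / (Real.pi * Real.sqrt (2 - x ^ 2)))) := by
  -- rewrite the integral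
  have hint : (∫ x in (-Real.sqrt 2)..(Real.sqrt 2), x ^ m / (Real.pi * Real.sqrt (2 - x ^ 2)))
      = (Real.sqrt 2)^m * ((pathB m 0 : ℝ) / 2^m) := by
    have h1 : (∫ x in (-Real.sqrt 2)..(Real.sqrt 2), x ^ m / (Real.pi * Real.sqrt (2 - x ^ 2)))
        = (∫ x in (-Real.sqrt 2)..(Real.sqrt 2), (x ^ m / Real.sqrt (2 - x ^ 2)) / Real.pi) := by
      apply intervalIntegral.integral_congr
      intro x _
      dsimp only
      rw [div_mul_eq_div_div_swap]
    rw [h1, intervalIntegral.integral_div]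
    have : (∫ x in (-Real.sqrt 2)..(Real.sqrt 2), x ^ m / Real.sqrt (2 - x ^ 2)) = Jm m := rfl
    rw [this, Jm_closed]
    field_simp [Real.pi_ne_zero]
  rw [hint]
  -- rewrite the sequence
  have hfun : ∀ k : ℕ,
      ((((1 / Real.sqrt (uniformOmega k + uniformOmega (k - 1))) • jacX) ^ m)
          (Finsupp.single k 1)) k
        = (1 / Real.sqrt (uniformOmega k + uniformOmega (k - 1)))^m
            * ((jacX ^ m) (Finsupp.single k 1)) k := by
    intro k
    rw [smul_pow, LinearMap.smul_apply, Finsupp.smul_apply, smul_eq_mul]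
  have hc : Tendsto (fun k : ℕ => (1 / Real.sqrt (uniformOmega k + uniformOmega (k - 1)))^m)
      atTop (nhds ((Real.sqrt 2)^m)) := by
    have h1 : Tendsto (fun k : ℕ => uniformOmega (k-1)) atTop (nhds (1/4)) :=
      tendsto_uniformOmega.comp (tendsto_sub_atTop_nat 1)
    have h2 : Tendsto (fun k : ℕ => uniformOmega k + uniformOmega (k-1)) atTop (nhds (1/2)) := by
      have h := tendsto_uniformOmega.add h1
      convert h using 2
      norm_num
    have h3 : Tendsto (fun k : ℕ => Real.sqrt (uniformOmega k + uniformOmega (k-1))) atTop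
        (nhds (Real.sqrt (1/2))) :=
      (Real.continuous_sqrt.continuousAt.tendsto).comp h2
    have h4 : Real.sqrt (1/2) ≠ 0 := by
      rw [ne_eq, Real.sqrt_eq_zero (by norm_num)]
      norm_num
    have h5 : Tendsto (fun k : ℕ => 1 / Real.sqrt (uniformOmega k + uniformOmega (k-1))) atTop
        (nhds (1 / Real.sqrt (1/2))) := tendsto_const_nhds.div h3 h4
    have h6 : 1 / Real.sqrt (1/2 : ℝ) = Real.sqrt 2 := by
      rw [show (1/2 : ℝ) = 2⁻¹ by norm_num, Real.sqrt_inv, one_div, inv_inv]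
    rw [h6] at h5
    exact h5.pow m
  have ha : Tendsto (fun k : ℕ => ((jacX ^ m) (Finsupp.single k 1)) k) atTop
      (nhds ((pathB m 0 : ℝ) / 2^m)) := by
    have := tendsto_coeff m 0
    simp only [add_zero, Int.toNat_natCast] at this
    exact this
  have := hc.mul ha
  refine this.congr fun k => (hfun k).symm
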